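/- Reducibility of β-redexes formed from abstractions: if [] ⊢ abs A M : arr A B, V is strongly normalizing, M[0 := const] is strongly normalizing, Red V A, and Red (M[0 := U]) B for every U with Red U A, then Red (app (abs A M) V) B. -/

import Mathlib

inductive Ty : Type
  | iota : Ty
  | arr : Ty → Ty → Ty

inductive Tm : Type
  | var : ℕ → Tm
  | const : Tm
  | app : Tm → Tm → Tm
  | abs : Ty → Tm → Tm

def liftRen (ρ : ℕ → ℕ) : ℕ → ℕ
  | 0 => 0
  | n + 1 => ρ n + 1

def rename (ρ : ℕ → ℕ) : Tm → Tm
  | Tm.var n => Tm.var (ρ n)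
  | Tm.const => Tm.const
  | Tm.app m n => Tm.app (rename ρ m) (rename ρ n)
  | Tm.abs a r => Tm.abs a (rename (liftRen ρ) r)

def liftSub (σ : ℕ → Tm) : ℕ → Tm
  | 0 => Tm.var 0
  | n + 1 => rename Nat.succ (σ n)

/-- Simultaneous capture-avoiding substitution. -/
def subst (σ : ℕ → Tm) : Tm → Tm
  | Tm.var n => σ n
  | Tm.const => Tm.const
  | Tm.app m n => Tm.app (subst σ m) (subst σ n)
  | Tm.abs a r => Tm.abs a (subst (liftSub σ) r)

/-- `subst0 s t` is `t[0 := s]`. -/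
def subst0 (s : Tm) (t : Tm) : Tm :=
  subst (fun n => match n with | 0 => s | Nat.succ k => Tm.var k) t

inductive Typed : List Ty → Tm → Ty → Prop
  | var {Γ : List Ty} {n : ℕ} {a : Ty} :
      Γ[n]? = some a → Typed Γ (Tm.var n) a
  | const {Γ : List Ty} {a : Ty} : Typed Γ Tm.const a
  | app {Γ : List Ty} {m n : Tm} {a b : Ty} :
      Typed Γ m (Ty.arr a b) → Typed Γ n a → Typed Γ (Tm.app m n) b
  | abs {Γ : List Ty} {r : Tm} {a b : Ty} :
      Typed (a :: Γ) r b → Typed Γ (Tm.abs a r) (Ty.arr a b)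

/-- One-step (β) reduction. -/
inductive Step : Tm → Tm → Prop
  | beta {a : Ty} {r m : Tm} : Step (Tm.app (Tm.abs a r) m) (subst0 m r)
  | appl {m m' n : Tm} : Step m m' → Step (Tm.app m n) (Tm.app m' n)
  | appr {m n n' : Tm} : Step n n' → Step (Tm.app m n) (Tm.app m n')
  | abs {a : Ty} {r r' : Tm} : Step r r' → Step (Tm.abs a r) (Tm.abs a r')

/-- Strong normalization. -/
inductive SN : Tm → Prop
  | intro {M : Tm} : (∀ M', Step M M' → SN M') → SN M

/-- Tait-style reducibility, by recursion on the type. -/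
def Red : Tm → Ty → Prop
  | M, Ty.iota => Typed [] M Ty.iota ∧ SN M
  | M, Ty.arr a b => Typed [] M (Ty.arr a b) ∧ ∀ U, Red U a → Red (Tm.app M U) b

-- AUX START
theorem rename_rename (ρ ρ' : ℕ → ℕ) (t : Tm) :
    rename ρ (rename ρ' t) = rename (ρ ∘ ρ') t := by
  induction t generalizing ρ ρ' with
  | var n => rfl
  | const => rfl
  | app m n ihm ihn => simp [rename, ihm, ihn]
  | abs a r ih =>
    simp only [rename, ih]
    have he : liftRen ρ ∘ liftRen ρ' = liftRen (ρ ∘ ρ') := by funext n; cases n <;> rfl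
    rw [he]

theorem subst_rename (σ : ℕ → Tm) (ρ : ℕ → ℕ) (t : Tm) :
    subst σ (rename ρ t) = subst (σ ∘ ρ) t := by
  induction t generalizing σ ρ with
  | var n => rfl
  | const => rfl
  | app m n ihm ihn => simp [rename, subst, ihm, ihn]
  | abs a r ih =>
    simp only [rename, subst, ih]
    have he : liftSub σ ∘ liftRen ρ = liftSub (σ ∘ ρ) := by funext n; cases n <;> rfl
    rw [he]

theorem rename_subst (ρ : ℕ → ℕ) (σ : ℕ → Tm) (t : Tm) :
    rename ρ (subst σ t) = subst (fun n => rename ρ (σ n)) t := by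
  induction t generalizing σ ρ with
  | var n => rfl
  | const => rfl
  | app m n ihm ihn => simp [rename, subst, ihm, ihn]
  | abs a r ih =>
    simp only [rename, subst, ih]
    have he : (fun n => rename (liftRen ρ) (liftSub σ n)) = liftSub (fun n => rename ρ (σ n)) := by
      funext n; cases n with
      | zero => rfl
      | succ k =>
        show rename (liftRen ρ) (rename Nat.succ (σ k)) = rename Nat.succ (rename ρ (σ k))
        rw [rename_rename, rename_rename]
        rfl
    rw [he]

theorem subst_subst (σ τ : ℕ → Tm) (t : Tm) :
    subst σ (subst τ t) = subst (fun n => subst σ (τ n)) t := by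
  induction t generalizing σ τ with
  | var n => rfl
  | const => rfl
  | app m n ihm ihn => simp [subst, ihm, ihn]
  | abs a r ih =>
    simp only [subst, ih]
    have he : (fun n => subst (liftSub σ) (liftSub τ n)) = liftSub (fun n => subst σ (τ n)) := by
      funext n; cases n with
      | zero => rfl
      | succ k =>
        show subst (liftSub σ) (rename Nat.succ (τ k)) = rename Nat.succ (subst σ (τ k))
        rw [subst_rename, rename_subst]
        rfl
    rw [he]

theorem subst_id (t : Tm) : subst Tm.var t = t := by
  induction t with
  | var n => rfl
  | const => rfl
  | app m n ihm ihn => simp [subst, ihm, ihn]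
  | abs a r ih =>
    simp only [subst]
    have he : liftSub Tm.var = Tm.var := by funext n; cases n <;> rfl
    rw [he, ih]

theorem subst0_subst (σ : ℕ → Tm) (m r : Tm) :
    subst σ (subst0 m r) = subst0 (subst σ m) (subst (liftSub σ) r) := by
  unfold subst0
  rw [subst_subst, subst_subst]
  congr 1
  funext n; cases n with
  | zero => rfl
  | succ k =>
    show σ k = subst _ (rename Nat.succ (σ k))
    rw [subst_rename]
    have : ((fun n => match n with | 0 => subst σ m | Nat.succ k => Tm.var k) ∘ Nat.succ) = Tm.var := by
      funext j; rfl
    rw [this, subst_id]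

theorem step_subst (σ : ℕ → Tm) {t t' : Tm} (h : Step t t') :
    Step (subst σ t) (subst σ t') := by
  induction h generalizing σ with
  | @beta a r m =>
    show Step (Tm.app (Tm.abs a (subst (liftSub σ) r)) (subst σ m)) _
    rw [subst0_subst]
    exact Step.beta
  | appl _ ih => exact Step.appl (ih σ)
  | appr _ ih => exact Step.appr (ih σ)
  | abs _ ih => exact Step.abs (ih (liftSub σ))

theorem sn_of_subst (σ : ℕ → Tm) : ∀ {s : Tm}, SN s → ∀ t, subst σ t = s → SN t := by
  intro s hs
  induction hs with
  | intro h ih =>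
    intro t het
    constructor
    intro t' hst
    exact ih _ (het ▸ step_subst σ hst) t' rfl

theorem sn_app_left : ∀ {s : Tm}, SN s → ∀ m n, s = Tm.app m n → SN m := by
  intro s hs
  induction hs with
  | intro h ih =>
    intro m n he
    constructor
    intro m' hm'
    subst he
    exact ih _ (Step.appl hm') m' n rfl

theorem rename_typed {Γ Δ : List Ty} {ρ : ℕ → ℕ} {t : Tm} {a : Ty}
    (ht : Typed Γ t a) (hρ : ∀ n b, Γ[n]? = some b → Δ[ρ n]? = some b) :
    Typed Δ (rename ρ t) a := by
  induction ht generalizing Δ ρ with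
  | var h => exact Typed.var (hρ _ _ h)
  | const => exact Typed.const
  | app _ _ ihm ihn => exact Typed.app (ihm hρ) (ihn hρ)
  | @abs Γ r a b _ ih =>
    refine Typed.abs (ih ?_)
    intro n c hc
    cases n with
    | zero => exact hc
    | succ k => exact hρ k c hc

theorem subst_typed {Γ Δ : List Ty} {σ : ℕ → Tm} {t : Tm} {a : Ty}
    (ht : Typed Γ t a) (hσ : ∀ n b, Γ[n]? = some b → Typed Δ (σ n) b) :
    Typed Δ (subst σ t) a := by
  induction ht generalizing Δ σ with
  | var h => exact hσ _ _ h
  | const => exact Typed.const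
  | app _ _ ihm ihn => exact Typed.app (ihm hσ) (ihn hσ)
  | @abs Γ r a b _ ih =>
    refine Typed.abs (ih ?_)
    intro n c hc
    cases n with
    | zero =>
      cases hc
      exact Typed.var rfl
    | succ k =>
      exact rename_typed (hσ k c hc) (fun _ _ h => h)

theorem subst0_typed {Γ : List Ty} {r m : Tm} {a b : Ty}
    (hr : Typed (a :: Γ) r b) (hm : Typed Γ m a) : Typed Γ (subst0 m r) b := by
  refine subst_typed hr ?_
  intro n c hc
  cases n with
  | zero => cases hc; exact hm
  | succ k => exact Typed.var hc

theorem subject_reduction {Γ : List Ty} {t t' : Tm} {a : Ty}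
    (ht : Typed Γ t a) (hs : Step t t') : Typed Γ t' a := by
  induction hs generalizing Γ a with
  | beta =>
    cases ht with
    | app hf hx =>
      cases hf with
      | abs hr => exact subst0_typed hr hx
  | appl _ ih =>
    cases ht with
    | app hf hx => exact Typed.app (ih hf) hx
  | appr _ ih =>
    cases ht with
    | app hf hx => exact Typed.app hf (ih hx)
  | abs _ ih =>
    cases ht with
    | abs hr => exact Typed.abs (ih hr)

theorem red_typed : ∀ {a : Ty} {M : Tm}, Red M a → Typed [] M a
  | Ty.iota, _, h => h.1
  | Ty.arr _ _, _, h => h.1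

theorem cr : ∀ a : Ty,
    (∀ {M : Tm}, Red M a → SN M) ∧
    (∀ {M M' : Tm}, Red M a → Step M M' → Red M' a) ∧
    (∀ {M : Tm}, Typed [] M a → (∀ A r, M ≠ Tm.abs A r) →
      (∀ M', Step M M' → Red M' a) → Red M a) := by
  intro a
  induction a with
  | iota =>
    refine ⟨fun h => h.2, fun h s => ⟨subject_reduction h.1 s, ?_⟩,
      fun ht _ hred => ⟨ht, SN.intro fun M' s => (hred M' s).2⟩⟩
    cases h.2 with
    | intro f => exact f _ s
  | arr a b iha ihb =>
    have hconst : Red Tm.const a :=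
      iha.2.2 Typed.const (fun _ _ h => Tm.noConfusion h) (fun M' s => nomatch s)
    refine ⟨?_, ?_, ?_⟩
    · intro M h
      exact sn_app_left (ihb.1 (h.2 Tm.const hconst)) M Tm.const rfl
    · intro M M' h s
      exact ⟨subject_reduction h.1 s, fun U hU => ihb.2.1 (h.2 U hU) (Step.appl s)⟩
    · intro M ht hne hred
      refine ⟨ht, fun U hU => ?_⟩
      have key : ∀ {U : Tm}, SN U → Red U a → Red (Tm.app M U) b := by
        intro U hUsn
        induction hUsn with
        | intro hU ihU =>
          intro hrU
          refine ihb.2.2 (Typed.app ht (red_typed hrU)) (fun _ _ h => Tm.noConfusion h) ?_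
          intro T s
          cases s with
          | beta => exact absurd rfl (hne _ _)
          | appl s' => exact (hred _ s').2 _ hrU
          | appr s' => exact ihU _ s' (iha.2.1 hrU s')
      exact key (iha.1 hU) hU

theorem red_beta_aux {A B : Ty} :
    ∀ {M : Tm}, SN M → ∀ {V : Tm}, SN V →
      Typed [] (Tm.abs A M) (Ty.arr A B) → Red V A →
      (∀ U, Red U A → Red (subst0 U M) B) →
      Red (Tm.app (Tm.abs A M) V) B := by
  intro M hM
  induction hM with
  | @intro M hM ihM =>
    intro V hV
    induction hV with
    | @intro V hV ihV =>
      intro ht hrV h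
      refine (cr B).2.2 (Typed.app ht (red_typed hrV)) (fun _ _ hh => Tm.noConfusion hh) ?_
      intro T s
      cases s with
      | beta => exact h V hrV
      | appl s' =>
        cases s' with
        | abs s'' =>
          exact ihM _ s'' (SN.intro hV) (subject_reduction ht (Step.abs s'')) hrV
            (fun U hU => (cr B).2.1 (h U hU) (step_subst _ s''))
      | appr s' => exact ihV _ s' ht ((cr A).2.1 hrV s') h
-- AUX END

theorem red_beta {M V : Tm} {A B : Ty}
    (ht : Typed [] (Tm.abs A M) (Ty.arr A B))
    (hV : SN V) (hMc : SN (subst0 Tm.const M)) (hrV : Red V A)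
    (h : ∀ U, Red U A → Red (subst0 U M) B) :
    Red (Tm.app (Tm.abs A M) V) B := by
  have hM : SN M := sn_of_subst _ hMc M rfl
  exact red_beta_aux hM hV ht hrV h
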